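/- arXiv:2006.05786 — 3 statements merged into one kernel-verified Lean document; each statement's English description precedes it below -/
import Mathlib

section
/- Suppose the model assumptions (A1)–(A5) hold in the degenerate case p = 0 (all customers see version 0, so all steps inside the strip are drawn from μ_0), respectively p = 1 (all steps from μ_1), and suppose c_n/n → 0 as n → ∞. Then the empirical conversion rate C_n^{(0)} = L_n^{(0)}/N_n^{(0)} converges almost surely to p_θ under P_0, and C_n^{(1)} = L_n^{(1)}/N_n^{(1)} converges almost surely to p_θ under P_1 (with C_n^{(i)} := 0 on the event {N_n^{(i)} = 0}). -/
open MeasureTheory ProbabilityTheory Filter Finset Asymptotics Topology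

noncomputable section

namespace ABTest

variable {Ω : Type*}

/-- The Bernoulli law on `ℕ` with success probability `r`. -/
def bern (r : ℝ) : Measure ℕ :=
  ENNReal.ofReal r • Measure.dirac 1 + ENNReal.ofReal (1 - r) • Measure.dirac 0

/-- The joint law of `(I_k, (ξ_k, η_k))`: given `I_k = i`, the pair `(ξ_k, η_k)` has law `μ_i`. -/
def mixLaw (p : ℝ) (μ0 μ1 : Measure (ℕ × ℕ)) : Measure (ℕ × ℕ × ℕ) :=
  ENNReal.ofReal p • (Measure.dirac 1).prod μ1 +
    ENNReal.ofReal (1 - p) • (Measure.dirac 0).prod μ0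

/-- The 2-dimensional random walk `R_k = (S_k, T_k)` in the semi-infinite strip of height `c`.
Step `k` (from `R_{k-1}` to `R_k`) uses the random variables with index `k`. -/
def walk (ξ η θ J : ℕ → Ω → ℕ) (c : ℕ) : ℕ → Ω → ℕ × ℕ
  | 0, _ => (0, 0)
  | k + 1, ω =>
    let R := walk ξ η θ J c k ω
    if R.2 = c then (R.1 + θ (k + 1) ω, R.2)
    else if R.2 + η (k + 1) ω ≤ c then (R.1 + ξ (k + 1) ω, R.2 + η (k + 1) ω)
    else if J (k + 1) ω = 1 then (R.1 + ξ (k + 1) ω, c)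
    else R

/-- `N_n^{(i)}`, the number of visitors in group `i` among the first `n` visitors. -/
def Ni (I : ℕ → Ω → ℕ) (i n : ℕ) (ω : Ω) : ℕ :=
  ∑ k ∈ Finset.Icc 1 n, if I k ω = i then 1 else 0

/-- `L_n^{(i)}`, the number of purchases (`X_k + Y_k > 0`) in group `i` among the first `n`
visitors, when the capacity of the popular good is `c`. -/
def Li (I J ξ η θ : ℕ → Ω → ℕ) (c i n : ℕ) (ω : Ω) : ℕ :=
  ∑ k ∈ Finset.Icc 1 n,
    if (walk ξ η θ J c (k - 1) ω).1 + (walk ξ η θ J c (k - 1) ω).2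
        < (walk ξ η θ J c k ω).1 + (walk ξ η θ J c k ω).2 ∧ I k ω = i
    then 1 else 0

/-- The chi-squared statistic associated with the contingency table of the first `n` visitors. -/
def chiSq (I J ξ η θ : ℕ → Ω → ℕ) (c n : ℕ) (ω : Ω) : ℝ :=
  let N0 : ℝ := (Ni I 0 n ω : ℝ)
  let N1 : ℝ := (Ni I 1 n ω : ℝ)
  let L0 : ℝ := (Li I J ξ η θ c 0 n ω : ℝ)
  let L1 : ℝ := (Li I J ξ η θ c 1 n ω : ℝ)
  let L : ℝ := L0 + L1
  ((L0 - L * N0 / (n : ℝ)) ^ 2 / (L * N0 / (n : ℝ)) +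
      (L1 - L * N1 / (n : ℝ)) ^ 2 / (L * N1 / (n : ℝ))) +
    ((N0 - L0 - ((n : ℝ) - L) * N0 / (n : ℝ)) ^ 2 / (((n : ℝ) - L) * N0 / (n : ℝ)) +
      (N1 - L1 - ((n : ℝ) - L) * N1 / (n : ℝ)) ^ 2 / (((n : ℝ) - L) * N1 / (n : ℝ)))

/-- `p_i = μ_i({(0,0)}ᶜ)`, the theoretical conversion rate of law `μ`. -/
def pSale (μ : Measure (ℕ × ℕ)) : ℝ := 1 - (μ {(0, 0)}).toReal

/-- `m^ξ`, the mean of the first coordinate under `μ`. -/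
def mXi (μ : Measure (ℕ × ℕ)) : ℝ := ∫ x, (x.1 : ℝ) ∂μ

/-- `m^η`, the mean of the second coordinate under `μ`. -/
def mEta (μ : Measure (ℕ × ℕ)) : ℝ := ∫ x, (x.2 : ℝ) ∂μ

/-- `p_θ = ν({m : 0 < m})`, the conversion rate after sell-out. -/
def pTheta (ν : Measure ℕ) : ℝ := (ν {m | 0 < m}).toReal

/-- `m^η = p m_1^η + (1-p) m_0^η`. -/
def mEtaBar (p : ℝ) (μ0 μ1 : Measure (ℕ × ℕ)) : ℝ := p * mEta μ1 + (1 - p) * mEta μ0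

/-- Model assumptions (A1)–(A5): the sequence `((I_k, ξ_k, η_k), J_k, θ_k)_{k ≥ 0}` is i.i.d.;
within one index, `(I_k, (ξ_k, η_k))`, `J_k` and `θ_k` are independent with respective laws
`mixLaw p μ0 μ1` (i.e. `I_k` is Bernoulli(`p`) and conditionally on `I_k = i` the vector
`(ξ_k, η_k)` has law `μ_i`), Bernoulli(`q`) and `ν`; the laws `μ_0, μ_1` charge every point of
`{0,1}²`, and all variables have finite second moments. -/
structure IsModel {Ω : Type*} [MeasurableSpace Ω] (P : Measure Ω) (p q : ℝ)
    (I J ξ η θ : ℕ → Ω → ℕ) (μ0 μ1 : Measure (ℕ × ℕ)) (ν : Measure ℕ) : Prop where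
  isProb : IsProbabilityMeasure P
  probμ0 : IsProbabilityMeasure μ0
  probμ1 : IsProbabilityMeasure μ1
  probν : IsProbabilityMeasure ν
  hp : 0 ≤ p ∧ p ≤ 1
  hq : 0 ≤ q ∧ q ≤ 1
  meas : ∀ k, Measurable fun ω => ((I k ω, ξ k ω, η k ω), J k ω, θ k ω)
  iid : iIndepFun
    (fun k ω => ((I k ω, ξ k ω, η k ω), J k ω, θ k ω)) P
  law : ∀ k, Measure.map (fun ω => ((I k ω, ξ k ω, η k ω), J k ω, θ k ω)) P
      = (mixLaw p μ0 μ1).prod ((bern q).prod ν)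
  pos0 : ∀ a b : ℕ, a ≤ 1 → b ≤ 1 → 0 < μ0 {(a, b)}
  pos1 : ∀ a b : ℕ, a ≤ 1 → b ≤ 1 → 0 < μ1 {(a, b)}
  mom0 : Integrable (fun x : ℕ × ℕ => (x.1 : ℝ) ^ 2 + (x.2 : ℝ) ^ 2) μ0
  mom1 : Integrable (fun x : ℕ × ℕ => (x.1 : ℝ) ^ 2 + (x.2 : ℝ) ^ 2) μ1
  momν : Integrable (fun m : ℕ => (m : ℝ) ^ 2) ν


/-! ### Auxiliary deterministic lemmas -/

lemma sum_Icc_one {M : Type*} [AddCommMonoid M] (f : ℕ → M) (n : ℕ) :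
    ∑ k ∈ Finset.Icc 1 n, f k = ∑ i ∈ Finset.range n, f (i + 1) := by
  rw [← Finset.Ico_add_one_right_eq_Icc, Finset.sum_Ico_eq_sum_range]
  simp [Nat.add_comm]

lemma sum_Icc_succ {M : Type*} [AddCommMonoid M] (f : ℕ → M) (n : ℕ) :
    ∑ k ∈ Finset.Icc 1 (n + 1), f k = (∑ k ∈ Finset.Icc 1 n, f k) + f (n + 1) := by
  rw [sum_Icc_one, sum_Icc_one, Finset.sum_range_succ]

lemma walk_succ (ξ η θ J : ℕ → Ω → ℕ) (c k : ℕ) (ω : Ω) :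
    walk ξ η θ J c (k + 1) ω =
      if (walk ξ η θ J c k ω).2 = c then
        ((walk ξ η θ J c k ω).1 + θ (k + 1) ω, (walk ξ η θ J c k ω).2)
      else if (walk ξ η θ J c k ω).2 + η (k + 1) ω ≤ c then
        ((walk ξ η θ J c k ω).1 + ξ (k + 1) ω, (walk ξ η θ J c k ω).2 + η (k + 1) ω)
      else if J (k + 1) ω = 1 then ((walk ξ η θ J c k ω).1 + ξ (k + 1) ω, c)
      else walk ξ η θ J c k ω := rfl

lemma walk_snd_le (ξ η θ J : ℕ → Ω → ℕ) (c : ℕ) (ω : Ω) :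
    ∀ k, (walk ξ η θ J c k ω).2 ≤ c := by
  intro k
  induction k with
  | zero => exact Nat.zero_le c
  | succ k ih =>
    rw [walk_succ]
    split_ifs with h1 h2 h3 <;>
      first
        | omega
        | (simp only [Prod.snd_mk] ; omega)

/-- The number of indices `j ≤ k` with `η_j = 1`. -/
def Acount (η : ℕ → Ω → ℕ) (k : ℕ) (ω : Ω) : ℕ :=
  ∑ j ∈ Finset.Icc 1 k, if η j ω = 1 then 1 else 0

lemma min_Acount_le_walk_snd (ξ η θ J : ℕ → Ω → ℕ) (c : ℕ) (ω : Ω) :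
    ∀ k, min c (Acount η k ω) ≤ (walk ξ η θ J c k ω).2 := by
  intro k
  induction k with
  | zero => simp [Acount]
  | succ k ih =>
    have hT := walk_snd_le ξ η θ J c ω k
    have hA : Acount η (k + 1) ω
        = Acount η k ω + (if η (k + 1) ω = 1 then 1 else 0) := sum_Icc_succ _ k
    rw [walk_succ]
    by_cases hη : η (k + 1) ω = 1 <;>
      [rw [if_pos hη] at hA; rw [if_neg hη] at hA] <;>
      split_ifs with h1 h2 h3 <;>
      first
        | omega
        | (simp only [Prod.snd_mk] ; omega)

lemma term_bound (I J ξ η θ : ℕ → Ω → ℕ) (c i : ℕ) (ω : Ω) (k : ℕ) (hk : 1 ≤ k)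
    (hI : I k ω = i) :
    (if (walk ξ η θ J c (k - 1) ω).1 + (walk ξ η θ J c (k - 1) ω).2
        < (walk ξ η θ J c k ω).1 + (walk ξ η θ J c k ω).2 ∧ I k ω = i
      then 1 else 0)
      ≤ (if 0 < θ k ω then 1 else 0)
        + (if (walk ξ η θ J c (k - 1) ω).2 < c then 1 else 0)
    ∧ (if 0 < θ k ω then 1 else 0)
      ≤ (if (walk ξ η θ J c (k - 1) ω).1 + (walk ξ η θ J c (k - 1) ω).2
          < (walk ξ η θ J c k ω).1 + (walk ξ η θ J c k ω).2 ∧ I k ω = i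
        then 1 else 0)
        + (if (walk ξ η θ J c (k - 1) ω).2 < c then 1 else 0) := by
  obtain ⟨m, rfl⟩ : ∃ m, k = m + 1 := ⟨k - 1, by omega⟩
  simp only [Nat.add_sub_cancel]
  have hle := walk_snd_le ξ η θ J c ω m
  by_cases hT : (walk ξ η θ J c m ω).2 = c
  · have hw : walk ξ η θ J c (m + 1) ω
        = ((walk ξ η θ J c m ω).1 + θ (m + 1) ω, (walk ξ η θ J c m ω).2) := by
      rw [walk_succ, if_pos hT]
    rw [hw, hI]
    simp only [eq_self_iff_true, and_true]
    constructor <;> split_ifs <;> omega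
  · constructor <;> split_ifs <;> omega

lemma Li_close (I J ξ η θ : ℕ → Ω → ℕ) (c i n : ℕ) (ω : Ω)
    (hI : ∀ k, I k ω = i) :
    Li I J ξ η θ c i n ω
      ≤ (∑ k ∈ Finset.Icc 1 n, if 0 < θ k ω then 1 else 0)
        + ∑ k ∈ Finset.Icc 1 n, (if Acount η (k - 1) ω < c then 1 else 0)
    ∧ (∑ k ∈ Finset.Icc 1 n, if 0 < θ k ω then 1 else 0)
      ≤ Li I J ξ η θ c i n ω
        + ∑ k ∈ Finset.Icc 1 n, (if Acount η (k - 1) ω < c then 1 else 0) := by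
  have hDE : ∀ k, (if (walk ξ η θ J c (k - 1) ω).2 < c then 1 else 0)
      ≤ (if Acount η (k - 1) ω < c then 1 else 0) := by
    intro k
    have := min_Acount_le_walk_snd ξ η θ J c ω (k - 1)
    split_ifs <;> omega
  constructor
  · rw [← Finset.sum_add_distrib]
    refine Finset.sum_le_sum fun k hk => ?_
    have h1 : 1 ≤ k := (Finset.mem_Icc.1 hk).1
    calc _ ≤ (if 0 < θ k ω then 1 else 0)
        + (if (walk ξ η θ J c (k - 1) ω).2 < c then 1 else 0) :=
          (term_bound I J ξ η θ c i ω k h1 (hI k)).1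
      _ ≤ _ := by have := hDE k; omega
  · unfold Li
    rw [← Finset.sum_add_distrib]
    refine Finset.sum_le_sum fun k hk => ?_
    have h1 : 1 ≤ k := (Finset.mem_Icc.1 hk).1
    calc (if 0 < θ k ω then 1 else 0)
        ≤ (if (walk ξ η θ J c (k - 1) ω).1 + (walk ξ η θ J c (k - 1) ω).2
            < (walk ξ η θ J c k ω).1 + (walk ξ η θ J c k ω).2 ∧ I k ω = i
          then 1 else 0)
          + (if (walk ξ η θ J c (k - 1) ω).2 < c then 1 else 0) :=
          (term_bound I J ξ η θ c i ω k h1 (hI k)).2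
      _ ≤ _ := by have := hDE k; omega

lemma E_le (η : ℕ → Ω → ℕ) (ω : Ω) (r : ℝ) (K : ℕ) (hr : 0 < r)
    (hK : ∀ j, K ≤ j → r / 2 * (j : ℝ) ≤ (Acount η j ω : ℝ)) (n c : ℕ) :
    (∑ k ∈ Finset.Icc 1 n, if Acount η (k - 1) ω < c then 1 else 0)
      ≤ K + 2 + ⌈2 / r * (c : ℝ)⌉₊ := by
  classical
  have hcard : (∑ k ∈ Finset.Icc 1 n, if Acount η (k - 1) ω < c then 1 else 0)
      = ((Finset.Icc 1 n).filter fun k => Acount η (k - 1) ω < c).card := by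
    simp [Finset.sum_boole]
  rw [hcard]
  have hsub : ((Finset.Icc 1 n).filter fun k => Acount η (k - 1) ω < c)
      ⊆ Finset.Icc 1 (K + 2 + ⌈2 / r * (c : ℝ)⌉₊) := by
    intro k hk
    simp only [Finset.mem_filter, Finset.mem_Icc] at hk ⊢
    obtain ⟨⟨hk1, _⟩, hA⟩ := hk
    refine ⟨hk1, ?_⟩
    by_cases hkK : k ≤ K + 1
    · omega
    · have hjK : K ≤ k - 1 := by omega
      have h1 : r / 2 * ((k - 1 : ℕ) : ℝ) < (c : ℝ) :=
        lt_of_le_of_lt (hK (k - 1) hjK) (by exact_mod_cast hA)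
      have h2 : ((k - 1 : ℕ) : ℝ) < 2 / r * (c : ℝ) := by
        rw [div_mul_eq_mul_div, lt_div_iff₀ hr]
        nlinarith [h1]
      have h3 : ((k - 1 : ℕ) : ℝ) < (⌈2 / r * (c : ℝ)⌉₊ : ℝ) :=
        lt_of_lt_of_le h2 (Nat.le_ceil _)
      have h4 : k - 1 < ⌈2 / r * (c : ℝ)⌉₊ := by exact_mod_cast h3
      omega
  calc _ ≤ (Finset.Icc 1 (K + 2 + ⌈2 / r * (c : ℝ)⌉₊)).card := Finset.card_le_card hsub
    _ = K + 2 + ⌈2 / r * (c : ℝ)⌉₊ := by rw [Nat.card_Icc]; omega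

/-- `C_n^{(i)} = L_n^{(i)} / N_n^{(i)}`, the empirical conversion rate of group `i`
(set to `0` on the event `{N_n^{(i)} = 0}`). -/
def Cni (I J ξ η θ : ℕ → Ω → ℕ) (c i n : ℕ) (ω : Ω) : ℝ :=
  if Ni I i n ω = 0 then 0 else (Li I J ξ η θ c i n ω : ℝ) / (Ni I i n ω : ℝ)


lemma bern_isProb {q : ℝ} (h0 : 0 ≤ q) (h1 : q ≤ 1) : IsProbabilityMeasure (bern q) := by
  constructor
  rw [bern]
  simp only [Measure.coe_add, Pi.add_apply, Measure.smul_apply, smul_eq_mul, measure_univ,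
    mul_one]
  rw [← ENNReal.ofReal_add h0 (by linarith)]
  norm_num

lemma main_case {Ω : Type*} [MeasurableSpace Ω] (P : Measure Ω) (q : ℝ)
    (I J ξ η θ : ℕ → Ω → ℕ) (μ : Measure (ℕ × ℕ)) (ν : Measure ℕ) (i : ℕ)
    (hP : IsProbabilityMeasure P) (hμ : IsProbabilityMeasure μ) (hν : IsProbabilityMeasure ν)
    (hq0 : 0 ≤ q) (hq1 : q ≤ 1)
    (hmeas : ∀ k, Measurable fun ω => ((I k ω, ξ k ω, η k ω), J k ω, θ k ω))
    (hiid : iIndepFun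
      (fun k ω => ((I k ω, ξ k ω, η k ω), J k ω, θ k ω)) P)
    (hlaw : ∀ k, Measure.map (fun ω => ((I k ω, ξ k ω, η k ω), J k ω, θ k ω)) P
      = ((Measure.dirac i).prod μ).prod ((bern q).prod ν))
    (hpos : 0 < μ {((0 : ℕ), (1 : ℕ))})
    (c : ℕ → ℕ)
    (hc0 : Tendsto (fun n : ℕ => (c n : ℝ) / (n : ℝ)) atTop (𝓝 0)) :
    ∀ᵐ ω ∂P, Tendsto (fun n : ℕ => Cni I J ξ η θ (c n) i n ω) atTop (𝓝 (pTheta ν)) := by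
  haveI := hP; haveI := hμ; haveI := hν
  haveI hbq : IsProbabilityMeasure (bern q) := bern_isProb hq0 hq1
  have mI : ∀ k, Measurable (I k) := fun k => (hmeas k).fst.fst
  have mη : ∀ k, Measurable (η k) := fun k => (hmeas k).fst.snd.snd
  have mθ : ∀ k, Measurable (θ k) := fun k => (hmeas k).snd.snd
  -- marginal laws
  have hmap1 : ∀ k, Measure.map (fun ω => (I k ω, ξ k ω, η k ω)) P
      = (Measure.dirac i).prod μ := by
    intro k
    have h : (fun ω => (I k ω, ξ k ω, η k ω))
        = Prod.fst ∘ (fun ω => ((I k ω, ξ k ω, η k ω), J k ω, θ k ω)) := rfl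
    rw [h, ← Measure.map_map measurable_fst (hmeas k), hlaw k, Measure.map_fst_prod,
      measure_univ, one_smul]
  have hmapθ : ∀ k, Measure.map (θ k) P = ν := by
    intro k
    have h2 : Measure.map (fun ω => (J k ω, θ k ω)) P = (bern q).prod ν := by
      have h : (fun ω => (J k ω, θ k ω))
          = Prod.snd ∘ (fun ω => ((I k ω, ξ k ω, η k ω), J k ω, θ k ω)) := rfl
      rw [h, ← Measure.map_map measurable_snd (hmeas k), hlaw k, Measure.map_snd_prod,
        measure_univ, one_smul]
    have h : θ k = Prod.snd ∘ (fun ω => (J k ω, θ k ω)) := rfl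
    rw [h, ← Measure.map_map measurable_snd ((hmeas k).snd), h2, Measure.map_snd_prod,
      measure_univ, one_smul]
  have hmapη : ∀ k, Measure.map (η k) P = μ.map Prod.snd := by
    intro k
    have h2 : Measure.map (fun ω => (ξ k ω, η k ω)) P = μ := by
      have h : (fun ω => (ξ k ω, η k ω))
          = Prod.snd ∘ (fun ω => (I k ω, ξ k ω, η k ω)) := rfl
      rw [h, ← Measure.map_map measurable_snd (hmeas k).fst, hmap1 k, Measure.map_snd_prod,
        measure_univ, one_smul]
    have h : η k = Prod.snd ∘ (fun ω => (ξ k ω, η k ω)) := rfl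
    rw [h, ← Measure.map_map measurable_snd (hmeas k).fst.snd, h2]
  have hmapI : ∀ k, Measure.map (I k) P = Measure.dirac i := by
    intro k
    have h : I k = Prod.fst ∘ (fun ω => (I k ω, ξ k ω, η k ω)) := rfl
    rw [h, ← Measure.map_map measurable_fst (hmeas k).fst, hmap1 k, Measure.map_fst_prod,
      measure_univ, one_smul]
  -- a.s. each I_k equals i
  have haeI : ∀ᵐ ω ∂P, ∀ k, I k ω = i := by
    rw [ae_all_iff]
    intro k
    refine ae_iff.2 ?_
    have h : {ω | ¬ I k ω = i} = I k ⁻¹' ({i}ᶜ) := rfl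
    rw [h, ← Measure.map_apply (mI k) MeasurableSet.of_discrete, hmapI k,
      Measure.dirac_apply' _ MeasurableSet.of_discrete]
    simp
  -- the positive rate of η = 1
  set r : ℝ := (μ (Prod.snd ⁻¹' ({1} : Set ℕ))).toReal with hrdef
  have hposr : 0 < μ (Prod.snd ⁻¹' ({1} : Set ℕ)) :=
    lt_of_lt_of_le hpos (measure_mono (Set.singleton_subset_iff.2 rfl))
  have hrpos : 0 < r := ENNReal.toReal_pos hposr.ne' (measure_ne_top μ _)
  -- SLLN for the θ-indicators
  set gθ : (ℕ × ℕ × ℕ) × ℕ × ℕ → ℝ := fun x => if 0 < x.2.2 then 1 else 0 with hgθ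
  have gθm : Measurable gθ :=
    (Measurable.of_discrete (f := fun m : ℕ => if 0 < m then (1 : ℝ) else 0)).comp
      (measurable_snd.comp measurable_snd)
  set Xθ : ℕ → Ω → ℝ := fun k ω => if 0 < θ (k + 1) ω then 1 else 0 with hXθdef
  have hXθmeas : ∀ k, Measurable (Xθ k) := fun k => gθm.comp (hmeas (k + 1))
  have hXθmap : ∀ k, Measure.map (Xθ k) P
      = Measure.map gθ (((Measure.dirac i).prod μ).prod ((bern q).prod ν)) := by
    intro k
    rw [← hlaw (k + 1), Measure.map_map gθm (hmeas (k + 1))]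
    rfl
  have hXθident : ∀ k, IdentDistrib (Xθ k) (Xθ 0) P P := fun k =>
    ⟨(hXθmeas k).aemeasurable, (hXθmeas 0).aemeasurable, by rw [hXθmap k, hXθmap 0]⟩
  have hXθindep : Pairwise (Function.onFun (IndepFun · · P) Xθ) := by
    intro a b hab
    exact (hiid.indepFun (show a + 1 ≠ b + 1 by omega)).comp gθm gθm
  have hsetθ : MeasurableSet {ω | 0 < θ 1 ω} := (mθ 1) MeasurableSet.of_discrete
  have hXθ0 : Xθ 0 = Set.indicator {ω | 0 < θ 1 ω} (fun _ => (1 : ℝ)) := by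
    funext ω
    by_cases h : 0 < θ 1 ω <;> simp [hXθdef, Set.indicator_apply, h]
  have hintθ : Integrable (Xθ 0) P := by
    rw [hXθ0]; exact (integrable_const 1).indicator hsetθ
  have hexpθ : ∫ ω, Xθ 0 ω ∂P = pTheta ν := by
    rw [hXθ0, integral_indicator_const _ hsetθ, smul_eq_mul, mul_one]
    have h : P {ω | 0 < θ 1 ω} = ν {m | 0 < m} := by
      rw [show {ω | 0 < θ 1 ω} = θ 1 ⁻¹' {m | 0 < m} from rfl,
        ← Measure.map_apply (mθ 1) MeasurableSet.of_discrete, hmapθ 1]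
    rw [measureReal_def, h]; rfl
  have hSLLNθ := strong_law_ae Xθ hintθ hXθindep hXθident
  rw [hexpθ] at hSLLNθ
  -- SLLN for the η-indicators
  set gη : (ℕ × ℕ × ℕ) × ℕ × ℕ → ℝ := fun x => if x.1.2.2 = 1 then 1 else 0 with hgη
  have gηm : Measurable gη :=
    (Measurable.of_discrete (f := fun m : ℕ => if m = 1 then (1 : ℝ) else 0)).comp
      ((measurable_fst.snd).snd)
  set Xη : ℕ → Ω → ℝ := fun k ω => if η (k + 1) ω = 1 then 1 else 0 with hXηdef
  have hXηmeas : ∀ k, Measurable (Xη k) := fun k => gηm.comp (hmeas (k + 1))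
  have hXηmap : ∀ k, Measure.map (Xη k) P
      = Measure.map gη (((Measure.dirac i).prod μ).prod ((bern q).prod ν)) := by
    intro k
    rw [← hlaw (k + 1), Measure.map_map gηm (hmeas (k + 1))]
    rfl
  have hXηident : ∀ k, IdentDistrib (Xη k) (Xη 0) P P := fun k =>
    ⟨(hXηmeas k).aemeasurable, (hXηmeas 0).aemeasurable, by rw [hXηmap k, hXηmap 0]⟩
  have hXηindep : Pairwise (Function.onFun (IndepFun · · P) Xη) := by
    intro a b hab
    exact (hiid.indepFun (show a + 1 ≠ b + 1 by omega)).comp gηm gηm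
  have hsetη : MeasurableSet {ω | η 1 ω = 1} := by
    have h : {ω | η 1 ω = 1} = η 1 ⁻¹' ({1} : Set ℕ) := rfl
    rw [h]; exact (mη 1) MeasurableSet.of_discrete
  have hXη0 : Xη 0 = Set.indicator {ω | η 1 ω = 1} (fun _ => (1 : ℝ)) := by
    funext ω
    by_cases h : η 1 ω = 1 <;> simp [hXηdef, Set.indicator_apply, h]
  have hintη : Integrable (Xη 0) P := by
    rw [hXη0]; exact (integrable_const 1).indicator hsetη
  have hexpη : ∫ ω, Xη 0 ω ∂P = r := by
    rw [hXη0, integral_indicator_const _ hsetη, smul_eq_mul, mul_one]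
    have h : P {ω | η 1 ω = 1} = μ (Prod.snd ⁻¹' ({1} : Set ℕ)) := by
      rw [show {ω | η 1 ω = 1} = η 1 ⁻¹' ({1} : Set ℕ) from rfl,
        ← Measure.map_apply (mη 1) MeasurableSet.of_discrete, hmapη 1,
        Measure.map_apply measurable_snd MeasurableSet.of_discrete]
    rw [measureReal_def, h]
  have hSLLNη := strong_law_ae Xη hintη hXηindep hXηident
  rw [hexpη] at hSLLNη
  -- combine
  filter_upwards [hSLLNθ, hSLLNη, haeI] with ω hθω hηω hIω
  have hcastθ : ∀ n : ℕ, ((∑ k ∈ Finset.Icc 1 n,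
      if 0 < θ k ω then 1 else 0 : ℕ) : ℝ) = ∑ j ∈ Finset.range n, Xθ j ω := by
    intro n
    rw [sum_Icc_one (f := fun k => if 0 < θ k ω then (1 : ℕ) else 0)]
    push_cast
    rfl
  have hcastη : ∀ n : ℕ, ((Acount η n ω : ℕ) : ℝ) = ∑ j ∈ Finset.range n, Xη j ω := by
    intro n
    rw [Acount, sum_Icc_one (f := fun k => if η k ω = 1 then (1 : ℕ) else 0)]
    push_cast
    rfl
  have hθω' : Tendsto (fun n : ℕ => ((∑ k ∈ Finset.Icc 1 n,
      if 0 < θ k ω then 1 else 0 : ℕ) : ℝ) / n) atTop (𝓝 (pTheta ν)) := by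
    apply hθω.congr
    intro n
    rw [smul_eq_mul, inv_mul_eq_div, hcastθ n]
  have hηω' : Tendsto (fun n : ℕ => ((Acount η n ω : ℕ) : ℝ) / n) atTop (𝓝 r) := by
    apply hηω.congr
    intro n
    rw [smul_eq_mul, inv_mul_eq_div, hcastη n]
  -- extract a linear lower bound on Acount
  have hev : ∀ᶠ n : ℕ in atTop, r / 2 < ((Acount η n ω : ℕ) : ℝ) / n :=
    hηω'.eventually (eventually_gt_nhds (by linarith))
  obtain ⟨K0, hK0⟩ := Filter.eventually_atTop.1 hev
  have hK : ∀ j, K0 + 1 ≤ j → r / 2 * (j : ℝ) ≤ (Acount η j ω : ℝ) := by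
    intro j hj
    have hjpos : (0 : ℝ) < (j : ℝ) := by
      exact_mod_cast Nat.pos_of_ne_zero (by omega)
    have h := hK0 j (by omega)
    exact le_of_lt ((lt_div_iff₀ hjpos).1 h)
  set K := K0 + 1 with hKdef
  set E : ℕ → ℕ :=
    fun n => ∑ k ∈ Finset.Icc 1 n, if Acount η (k - 1) ω < c n then 1 else 0 with hEdef
  have hEle : ∀ n, E n ≤ K + 2 + ⌈2 / r * (c n : ℝ)⌉₊ :=
    fun n => E_le η ω r K hrpos hK n (c n)
  have hEten : Tendsto (fun n : ℕ => (E n : ℝ) / n) atTop (𝓝 0) := by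
    apply squeeze_zero (g := fun n : ℕ => ((K : ℝ) + 3) / n + (2 / r) * ((c n : ℝ) / n))
      (fun n => by positivity) ?_ ?_
    · intro n
      have h1 : (E n : ℝ) ≤ (K : ℝ) + 2 + (⌈2 / r * (c n : ℝ)⌉₊ : ℝ) := by
        exact_mod_cast hEle n
      have h2 : (⌈2 / r * (c n : ℝ)⌉₊ : ℝ) < 2 / r * (c n : ℝ) + 1 :=
        Nat.ceil_lt_add_one (by positivity)
      have h3 : (E n : ℝ) / n ≤ ((K : ℝ) + 3 + 2 / r * (c n : ℝ)) / n :=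
        div_le_div_of_nonneg_right (by linarith) (Nat.cast_nonneg n)
      refine h3.trans_eq ?_
      rw [add_div, mul_div_assoc]
    · have t1 := tendsto_const_div_atTop_nhds_zero_nat ((K : ℝ) + 3)
      have t2 := hc0.const_mul (2 / r)
      have := t1.add t2
      simpa using this
  -- compare L with the θ-count
  set Θ : ℕ → ℕ := fun n => ∑ k ∈ Finset.Icc 1 n, if 0 < θ k ω then 1 else 0 with hΘdef
  have habs : ∀ n, |((Li I J ξ η θ (c n) i n ω : ℕ) : ℝ) - ((Θ n : ℕ) : ℝ)| ≤ (E n : ℝ) := by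
    intro n
    have h1 : Li I J ξ η θ (c n) i n ω ≤ Θ n + E n := by
      simp only [hΘdef, hEdef]
      exact (Li_close I J ξ η θ (c n) i n ω hIω).1
    have h2 : Θ n ≤ Li I J ξ η θ (c n) i n ω + E n := by
      simp only [hΘdef, hEdef]
      exact (Li_close I J ξ η θ (c n) i n ω hIω).2
    have h1' : ((Li I J ξ η θ (c n) i n ω : ℕ) : ℝ) ≤ ((Θ n : ℕ) : ℝ) + ((E n : ℕ) : ℝ) := by
      exact_mod_cast h1
    have h2' : ((Θ n : ℕ) : ℝ) ≤ ((Li I J ξ η θ (c n) i n ω : ℕ) : ℝ) + ((E n : ℕ) : ℝ) := by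
      exact_mod_cast h2
    rw [abs_sub_le_iff]
    constructor <;> linarith
  have hdiff : Tendsto
      (fun n : ℕ => (((Li I J ξ η θ (c n) i n ω : ℕ) : ℝ) - ((Θ n : ℕ) : ℝ)) / n)
      atTop (𝓝 0) := by
    apply squeeze_zero_norm (a := fun n : ℕ => (E n : ℝ) / n) ?_ hEten
    intro n
    rw [Real.norm_eq_abs, abs_div, abs_of_nonneg (Nat.cast_nonneg n : (0 : ℝ) ≤ (n : ℝ))]
    exact div_le_div_of_nonneg_right (habs n) (Nat.cast_nonneg n)
  have hL : Tendsto (fun n : ℕ => ((Li I J ξ η θ (c n) i n ω : ℕ) : ℝ) / n)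
      atTop (𝓝 (pTheta ν)) := by
    have h := hθω'.add hdiff
    rw [add_zero] at h
    apply h.congr
    intro n
    rw [← add_div]
    simp only [hΘdef]
    ring_nf
  -- identify Cni with L/n
  have hNi : ∀ n, Ni I i n ω = n := by
    intro n
    unfold Ni
    rw [Finset.sum_congr rfl fun k _ => if_pos (hIω k), Finset.sum_const, smul_eq_mul,
      mul_one, Nat.card_Icc]
    omega
  apply Tendsto.congr' ?_ hL
  filter_upwards [eventually_ge_atTop 1] with n hn
  rw [Cni, hNi n, if_neg (by omega)]

/-- **Theorem 2 (strong law for the conversion rates of each version used alone).**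
Under the model assumptions (A1)–(A5) (with the degenerate choices `p = 0` resp. `p = 1` of the
Bernoulli parameter of the `I_k`, i.e. under `P_0` resp. `P_1`), if `c_n / n → 0`, then the
empirical conversion rate `C_n^{(0)}` converges almost surely to `p_θ` under `P_0`, and
`C_n^{(1)}` converges almost surely to `p_θ` under `P_1`. -/
theorem conversion_rate_as_limit_pure_versions
    {Ω : Type*} [MeasurableSpace Ω] (P : Measure Ω) (p q : ℝ)
    (I J ξ η θ : ℕ → Ω → ℕ) (μ0 μ1 : Measure (ℕ × ℕ)) (ν : Measure ℕ)
    (hM : IsModel P p q I J ξ η θ μ0 μ1 ν)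
    (c : ℕ → ℕ) (hcpos : ∀ n, 0 < c n) (hmono : Monotone c)
    (hunbdd : Tendsto c atTop atTop)
    (hc0 : Tendsto (fun n : ℕ => (c n : ℝ) / (n : ℝ)) atTop (𝓝 0)) :
    (p = 0 → ∀ᵐ ω ∂P,
        Tendsto (fun n : ℕ => Cni I J ξ η θ (c n) 0 n ω) atTop (𝓝 (pTheta ν))) ∧
    (p = 1 → ∀ᵐ ω ∂P,
        Tendsto (fun n : ℕ => Cni I J ξ η θ (c n) 1 n ω) atTop (𝓝 (pTheta ν))) := by
  constructor
  · intro hp0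
    subst hp0
    have hmix : mixLaw 0 μ0 μ1 = (Measure.dirac (0 : ℕ)).prod μ0 := by
      rw [mixLaw]
      simp
    exact main_case P q I J ξ η θ μ0 ν 0 hM.isProb hM.probμ0 hM.probν hM.hq.1 hM.hq.2
      hM.meas hM.iid (fun k => by rw [hM.law k, hmix])
      (hM.pos0 0 1 (by norm_num) (by norm_num)) c hc0
  · intro hp1
    subst hp1
    have hmix : mixLaw 1 μ0 μ1 = (Measure.dirac (1 : ℕ)).prod μ1 := by
      rw [mixLaw]
      simp
    exact main_case P q I J ξ η θ μ1 ν 1 hM.isProb hM.probμ1 hM.probν hM.hq.1 hM.hq.2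
      hM.meas hM.iid (fun k => by rw [hM.law k, hmix])
      (hM.pos1 0 1 (by norm_num) (by norm_num)) c hc0

end ABTest
end
end

section
/- Let (η_k)_{k≥1} be i.i.d. nonnegative random variables with mean m^η = E[η_1] ∈ (0,∞), let (J_k)_{k≥1} be i.i.d. Bernoulli(q) with q ∈ (0,1], independent of (η_k), and set S̃_0 = 0, S̃_m = Σ_{k=1}^m η_k 1{J_k=1}. Let (c_n)_{n≥1} be a nondecreasing unbounded sequence of positive integers. Then for every a > 0, every ε > 0 and every δ ∈ (0, ε q m^η), P( min_{m=0,…,⌊a c_n⌋} (S̃_{m+⌊ε √(c_n)⌋} − S̃_m) ≥ δ √(c_n) ) → 1 as n → ∞. -/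
open MeasureTheory ProbabilityTheory Filter Finset Topology

noncomputable section

namespace ABTest

variable {Ω : Type*}

/-- `S̃_m = Σ_{k=1}^m η_k 1{J_k = 1}`. -/
def Stilde (η : ℕ → Ω → ℝ) (J : ℕ → Ω → ℕ) (m : ℕ) (ω : Ω) : ℝ :=
  ∑ k ∈ Finset.Icc 1 m, η k ω * (if J k ω = 1 then 1 else 0)

lemma exp_le_lin (t Tr x : ℝ) (ht : t < 0) (hTr : 0 < Tr) (hx : 0 ≤ x) :
    Real.exp (t * x) ≤ 1 + min x Tr / Tr * (Real.exp (Tr * t) - 1) := by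
  rcases le_or_gt x Tr with h | h
  · rw [min_eq_left h]
    have hb0 : 0 ≤ x / Tr := div_nonneg hx hTr.le
    have hb1 : x / Tr ≤ 1 := (div_le_one hTr).2 h
    have hc := convexOn_exp.2 (Set.mem_univ (0:ℝ)) (Set.mem_univ (Tr * t))
      (by linarith : (0:ℝ) ≤ 1 - x / Tr) hb0 (by ring)
    simp only [smul_eq_mul, mul_zero, Real.exp_zero, mul_one] at hc
    have hx' : (x / Tr) * (Tr * t) = t * x := by field_simp
    rw [hx'] at hc
    calc Real.exp (t * x) ≤ (1 - x / Tr) * 1 + x / Tr * Real.exp (Tr * t) := by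
          simpa using hc
      _ = 1 + x / Tr * (Real.exp (Tr * t) - 1) := by ring
  · rw [min_eq_right h.le]
    have : t * x ≤ Tr * t := by nlinarith
    calc Real.exp (t * x) ≤ Real.exp (Tr * t) := Real.exp_le_exp.2 this
      _ = 1 + Tr / Tr * (Real.exp (Tr * t) - 1) := by
          rw [div_self hTr.ne']; ring

lemma exists_t (θ μT Tr : ℝ) (hθμ : θ < μT) (hTr : 0 < Tr) :
    ∃ t : ℝ, t < 0 ∧
      Real.exp (-θ * t) * (1 + μT / Tr * (Real.exp (Tr * t) - 1)) < 1 := by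
  set h : ℝ → ℝ := fun t => Real.exp (-θ * t) * (1 + μT / Tr * (Real.exp (Tr * t) - 1)) with hh
  have hd : HasDerivAt h (μT - θ) 0 := by
    have h1 : HasDerivAt (fun t : ℝ => Real.exp (-θ * t)) (Real.exp (-θ * 0) * -θ) 0 := by
      simpa using ((hasDerivAt_id 0).const_mul (-θ)).exp
    have h2 : HasDerivAt (fun t : ℝ => 1 + μT / Tr * (Real.exp (Tr * t) - 1))
        (μT / Tr * (Real.exp (Tr * 0) * Tr)) 0 := by
      simpa using (((((hasDerivAt_id 0).const_mul Tr).exp).sub_const 1).const_mul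
        (μT / Tr)).const_add 1
    have := h1.mul h2
    convert this using 1
    · rfl
    · rfl
    · rfl
    simp only [mul_zero, Real.exp_zero]
    field_simp
    ring
  rw [hasDerivAt_iff_tendsto_slope] at hd
  have hd' : Tendsto (slope h 0) (𝓝[<] (0:ℝ)) (𝓝 (μT - θ)) :=
    hd.mono_left (nhdsWithin_mono 0 (fun x hx => ne_of_lt hx))
  have hev : ∀ᶠ s in 𝓝[<] (0:ℝ), 0 < slope h 0 s :=
    hd'.eventually (eventually_gt_nhds (by linarith))
  have hev2 : ∀ᶠ s in 𝓝[<] (0:ℝ), s < 0 := eventually_mem_nhdsWithin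
  obtain ⟨t, hts, ht0⟩ := (hev.and hev2).exists
  refine ⟨t, ht0, ?_⟩
  have h0 : h 0 = 1 := by simp [hh]
  have hsl : slope h 0 t = (h t - 1) / t := by
    rw [slope_def_field, h0, div_eq_div_iff (by linarith) (by linarith)]; ring
  rw [hsl] at hts
  show h t < 1
  rcases div_pos_iff.mp hts with ⟨hn, hp⟩ | ⟨hn, hp⟩ <;> linarith

lemma decay (K ρ : ℝ) (h0 : 0 ≤ ρ) (h1 : ρ < 1) :
    Tendsto (fun k : ℕ => K * ((k : ℝ) + 1) ^ 2 * ρ ^ k) atTop (𝓝 0) := by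
  have habs : |ρ| < 1 := by rwa [abs_of_nonneg h0]
  have h2 := (tendsto_pow_const_mul_const_pow_of_abs_lt_one 2 habs).const_mul K
  have hb1 := (tendsto_pow_const_mul_const_pow_of_abs_lt_one 1 habs).const_mul (2 * K)
  have hb0 := (tendsto_pow_const_mul_const_pow_of_abs_lt_one 0 habs).const_mul K
  have := (h2.add hb1).add hb0
  simp only [mul_zero, add_zero] at this
  refine this.congr (fun k => ?_)
  simp only [pow_one, pow_zero, one_mul]
  ring

lemma sqrt_tendsto : Tendsto Real.sqrt atTop atTop := by
  rw [tendsto_atTop_atTop]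
  intro b
  exact ⟨b ^ 2, fun x hx => by
    calc b ≤ |b| := le_abs_self b
      _ = Real.sqrt (b ^ 2) := (Real.sqrt_sq_eq_abs b).symm
      _ ≤ Real.sqrt x := Real.sqrt_le_sqrt hx⟩


set_option maxHeartbeats 2000000 in
/-- **Uniform lower bound on increments of the thinned random walk:** if `(η_k)` are i.i.d.
nonnegative with mean `m^η ∈ (0,∞)`, `(J_k)` are i.i.d. Bernoulli(`q`), `q ∈ (0,1]`,
independent of `(η_k)`, and `(c_n)` is a nondecreasing unbounded sequence of positive
integers, then for all `a > 0`, `ε > 0` and `δ ∈ (0, ε q m^η)`,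
`P(min_{0 ≤ m ≤ ⌊a c_n⌋} (S̃_{m + ⌊ε √c_n⌋} - S̃_m) ≥ δ √c_n) → 1`. -/
theorem min_increment_of_thinned_walk
    {Ω : Type*} [MeasurableSpace Ω] (P : Measure Ω) [IsProbabilityMeasure P]
    (η : ℕ → Ω → ℝ) (J : ℕ → Ω → ℕ) (q : ℝ) (hq : 0 < q ∧ q ≤ 1)
    (hmeas : ∀ k, Measurable fun ω => (η k ω, J k ω))
    (hnonneg : ∀ k ω, 0 ≤ η k ω)
    (hindep : iIndepFun (fun k ω => (η k ω, J k ω)) P)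
    (hlaw : ∀ k, Measure.map (fun ω => (η k ω, J k ω)) P
      = (Measure.map (η 1) P).prod (bern q))
    (hint : Integrable (η 1) P)
    (mη : ℝ) (hmη : mη = ∫ ω, η 1 ω ∂P) (hmηpos : 0 < mη)
    (c : ℕ → ℕ) (hcpos : ∀ n, 0 < c n) (hmono : Monotone c)
    (hunbdd : Tendsto c atTop atTop) :
    ∀ a : ℝ, 0 < a → ∀ ε : ℝ, 0 < ε → ∀ δ : ℝ, 0 < δ → δ < ε * q * mη →
      Tendsto (fun n : ℕ =>
          P {ω | ∀ m ≤ ⌊a * (c n : ℝ)⌋₊,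
              δ * Real.sqrt (c n) ≤
                Stilde η J (m + ⌊ε * Real.sqrt (c n)⌋₊) ω - Stilde η J m ω})
        atTop (𝓝 1) := by
  obtain ⟨hq0, hq1⟩ := hq
  intro a ha ε hε δ hδ hδ'
  classical
  -- basic instances on `bern q`
  haveI hbern : IsProbabilityMeasure (bern q) := by
    constructor
    simp only [bern, Measure.add_apply, Measure.smul_apply, smul_eq_mul,
      measure_univ, mul_one]
    rw [← ENNReal.ofReal_add (by linarith) (by linarith)]
    norm_num
  -- the thinned variables
  set F : ℝ × ℕ → ℝ := fun p => p.1 * (if p.2 = 1 then 1 else 0) with hFdef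
  have hFmeas : Measurable F :=
    measurable_fst.mul (Measurable.ite (measurable_snd (measurableSet_singleton 1))
      measurable_const measurable_const)
  set X : ℕ → Ω → ℝ := fun k ω => η k ω * (if J k ω = 1 then 1 else 0) with hXdef
  have hXmeas : ∀ k, Measurable (X k) := fun k => hFmeas.comp (hmeas k)
  have hXnonneg : ∀ k ω, 0 ≤ X k ω := by
    intro k ω
    have : (0:ℝ) ≤ η k ω * (if J k ω = 1 then 1 else 0) :=
      mul_nonneg (hnonneg k ω) (by split <;> norm_num)
    exact this
  have hXindep : iIndepFun X P :=
    hindep.comp (fun _ => F) (fun _ => hFmeas)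
  have hlawX : ∀ k, Measure.map (X k) P = Measure.map (X 1) P := by
    intro k
    have h1 : Measure.map (X k) P
        = Measure.map F (Measure.map (fun ω => (η k ω, J k ω)) P) :=
      (Measure.map_map hFmeas (hmeas k)).symm
    have h2 : Measure.map (X 1) P
        = Measure.map F (Measure.map (fun ω => (η 1 ω, J 1 ω)) P) :=
      (Measure.map_map hFmeas (hmeas 1)).symm
    rw [h1, h2, hlaw k, hlaw 1]
  have htransfer : ∀ (k : ℕ) (g : ℝ → ℝ), Measurable g →
      ∫ ω, g (X k ω) ∂P = ∫ ω, g (X 1 ω) ∂P := by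
    intro k g hg
    rw [← integral_map (hXmeas k).aemeasurable hg.aestronglyMeasurable, hlawX k,
      integral_map (hXmeas 1).aemeasurable hg.aestronglyMeasurable]
  -- the mean of X 1 is q * mη
  have hmean : ∫ ω, X 1 ω ∂P = q * mη := by
    have hη1 : Measurable (η 1) := measurable_fst.comp (hmeas 1)
    have h1 : ∫ ω, X 1 ω ∂P = ∫ p, F p ∂((Measure.map (η 1) P).prod (bern q)) := by
      rw [← hlaw 1, integral_map (hmeas 1).aemeasurable hFmeas.aestronglyMeasurable]
    rw [h1]
    have h2 : ∫ p, F p ∂((Measure.map (η 1) P).prod (bern q))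
        = (∫ x, x ∂(Measure.map (η 1) P)) * ∫ j, (if j = 1 then (1:ℝ) else 0) ∂(bern q) :=
      integral_prod_mul (fun x : ℝ => x) (fun j : ℕ => if j = 1 then (1:ℝ) else 0)
    rw [h2]
    have h3 : ∫ x, x ∂(Measure.map (η 1) P) = mη := by
      rw [integral_map (f := fun x : ℝ => x) hη1.aemeasurable
        measurable_id.aestronglyMeasurable, hmη]
    have h4 : ∫ j, (if j = 1 then (1:ℝ) else 0) ∂(bern q) = q := by
      have hgint : Integrable (fun j : ℕ => if j = 1 then (1:ℝ) else 0) (bern q) := by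
        refine Integrable.mono' (integrable_const 1)
          (measurable_of_countable _).aestronglyMeasurable (ae_of_all _ fun j => ?_)
        split <;> simp
      rw [bern] at hgint ⊢
      rw [integral_add_measure hgint.left_of_add_measure hgint.right_of_add_measure,
        integral_smul_measure, integral_smul_measure, integral_dirac, integral_dirac,
        ENNReal.toReal_ofReal hq0.le, ENNReal.toReal_ofReal (by linarith)]
      norm_num
    rw [h3, h4]; ring
  -- integrability of X 1 and truncations
  have hXint : Integrable (X 1) P := by
    refine Integrable.mono' hint.abs (hXmeas 1).aestronglyMeasurable (ae_of_all _ fun ω => ?_)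
    have : |X 1 ω| ≤ |η 1 ω| := by
      have : X 1 ω = η 1 ω * (if J 1 ω = 1 then 1 else 0) := rfl
      rw [this, abs_mul]
      split <;> simp [abs_nonneg]
    simpa using this
  -- choose the truncation level T
  set θ : ℝ := δ / ε with hθdef
  have hθpos : 0 < θ := div_pos hδ hε
  have hθlt : θ < q * mη := by
    rw [hθdef, div_lt_iff₀ hε]
    nlinarith
  have hminint : ∀ T : ℕ, Integrable (fun ω => min (X 1 ω) T) P := by
    intro T
    refine Integrable.mono' hXint.abs ((hXmeas 1).min measurable_const).aestronglyMeasurable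
      (ae_of_all _ fun ω => ?_)
    have h1 : 0 ≤ min (X 1 ω) T := le_min (hXnonneg 1 ω) (Nat.cast_nonneg T)
    have h2 : min (X 1 ω) T ≤ X 1 ω := min_le_left _ _
    rw [Real.norm_eq_abs, abs_of_nonneg h1]
    exact h2.trans (le_abs_self _)
  have hmct : Tendsto (fun T : ℕ => ∫ ω, min (X 1 ω) T ∂P) atTop (𝓝 (q * mη)) := by
    rw [← hmean]
    refine integral_tendsto_of_tendsto_of_monotone hminint hXint
      (ae_of_all _ fun ω => ?_) (ae_of_all _ fun ω => ?_)
    · intro i j hij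
      exact min_le_min le_rfl (Nat.cast_le.2 hij)
    · refine tendsto_atTop_of_eventually_const (i₀ := ⌈X 1 ω⌉₊) fun i hi => ?_
      exact min_eq_left ((Nat.le_ceil _).trans (Nat.cast_le.2 hi))
  obtain ⟨T, hTθ, hT1⟩ :=
    ((hmct.eventually (eventually_gt_nhds hθlt)).and (eventually_ge_atTop 1)).exists
  set Tr : ℝ := (T : ℝ) with hTrdef
  have hTr : 0 < Tr := by
    rw [hTrdef]; exact_mod_cast Nat.lt_of_lt_of_le Nat.zero_lt_one hT1
  set μT : ℝ := ∫ ω, min (X 1 ω) Tr ∂P with hμTdef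
  have hμTθ : θ < μT := hTθ
  have hμTle : μT ≤ Tr := by
    rw [hμTdef]
    calc ∫ ω, min (X 1 ω) Tr ∂P ≤ ∫ _, Tr ∂P :=
          integral_mono (hminint T) (integrable_const Tr) (fun ω => min_le_right _ _)
      _ = Tr := by simp
  -- choose t < 0
  obtain ⟨t, ht0, hρlt⟩ := exists_t θ μT Tr hμTθ hTr
  set B : ℝ := 1 + μT / Tr * (Real.exp (Tr * t) - 1) with hBdef
  set ρ : ℝ := Real.exp (-θ * t) * B with hρdef
  set C : ℝ := Real.exp (-θ * t) with hCdef
  have hC1 : 1 ≤ C := Real.one_le_exp (by nlinarith)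
  have hBpos : 0 < B := by
    have he1 : Real.exp (Tr * t) ≤ 1 := Real.exp_le_one_iff.2 (by nlinarith)
    have he0 : 0 < Real.exp (Tr * t) := Real.exp_pos _
    have hr0 : 0 ≤ μT / Tr := div_nonneg (by linarith) hTr.le
    have hr1 : μT / Tr ≤ 1 := (div_le_one hTr).2 hμTle
    rw [hBdef]; nlinarith
  have hρpos : 0 < ρ := mul_pos (Real.exp_pos _) hBpos
  -- the mgf of one thinned variable
  have hexpint : ∀ k, Integrable (fun ω => Real.exp (t * X k ω)) P := by
    intro k
    refine Integrable.mono' (integrable_const 1)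
      (((hXmeas k).const_mul t).exp).aestronglyMeasurable (ae_of_all _ fun ω => ?_)
    rw [Real.norm_eq_abs, abs_of_pos (Real.exp_pos _)]
    exact Real.exp_le_one_iff.2 (mul_nonpos_of_nonpos_of_nonneg ht0.le (hXnonneg k ω))
  set M : ℝ := ∫ ω, Real.exp (t * X 1 ω) ∂P with hMdef
  have hMeq : ∀ k, ∫ ω, Real.exp (t * X k ω) ∂P = M := fun k =>
    htransfer k (fun x => Real.exp (t * x)) ((measurable_id.const_mul t).exp)
  have hMpos : 0 < M := by
    have := mgf_pos (μ := P) (X := X 1) (t := t) (hexpint 1)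
    exact this
  have hMB : M ≤ B := by
    have hb : ∀ ω, Real.exp (t * X 1 ω)
        ≤ 1 + min (X 1 ω) Tr / Tr * (Real.exp (Tr * t) - 1) := fun ω =>
      exp_le_lin t Tr (X 1 ω) ht0 hTr (hXnonneg 1 ω)
    have hrint : Integrable (fun ω => 1 + min (X 1 ω) Tr / Tr * (Real.exp (Tr * t) - 1)) P := by
      exact (integrable_const 1).add (((hminint T).div_const Tr).mul_const _)
    calc M ≤ ∫ ω, (1 + min (X 1 ω) Tr / Tr * (Real.exp (Tr * t) - 1)) ∂P :=
          integral_mono (hexpint 1) hrint hb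
      _ = 1 + μT / Tr * (Real.exp (Tr * t) - 1) := by
          rw [integral_add (integrable_const 1) (((hminint T).div_const Tr).mul_const _),
            integral_mul_const, integral_div]
          simp [hμTdef, hTrdef]
      _ = B := hBdef.symm
  have hM1 : C * M ≤ ρ := by
    rw [hρdef, hCdef]
    exact mul_le_mul_of_nonneg_left hMB (Real.exp_pos _).le
  -- notation for the scales
  set L : ℕ → ℕ := fun n => ⌊ε * Real.sqrt (c n)⌋₊ with hLdef
  set Mn : ℕ → ℕ := fun n => ⌊a * (c n : ℝ)⌋₊ with hMndef
  set u : ℕ → ℝ := fun n => δ * Real.sqrt (c n) with hudef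
  -- Chernoff bound for a single block
  have hblock : ∀ n m : ℕ,
      P {ω | (∑ k ∈ Finset.Ioc m (m + L n), X k ω) ≤ u n}
        ≤ ENNReal.ofReal (C * ρ ^ L n) := by
    intro n m
    set s : Finset ℕ := Finset.Ioc m (m + L n) with hsdef
    have hSmeas : Measurable (fun ω => ∑ k ∈ s, X k ω) :=
      Finset.measurable_sum s (fun k _ => hXmeas k)
    have hSnonneg : ∀ ω, 0 ≤ ∑ k ∈ s, X k ω := fun ω =>
      Finset.sum_nonneg fun k _ => hXnonneg k ω
    have hSexpint : Integrable (fun ω => Real.exp (t * ∑ k ∈ s, X k ω)) P := by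
      refine Integrable.mono' (integrable_const 1)
        ((hSmeas.const_mul t).exp).aestronglyMeasurable (ae_of_all _ fun ω => ?_)
      rw [Real.norm_eq_abs, abs_of_pos (Real.exp_pos _)]
      exact Real.exp_le_one_iff.2 (mul_nonpos_of_nonpos_of_nonneg ht0.le (hSnonneg ω))
    have hmgf : mgf (fun ω => ∑ k ∈ s, X k ω) P t = M ^ L n := by
      have he : (fun ω => ∑ k ∈ s, X k ω) = ∑ k ∈ s, X k := by
        ext ω; simp
      rw [he, hXindep.mgf_sum hXmeas s]
      have hc : ∀ k ∈ s, mgf (X k) P t = M := fun k _ => hMeq k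
      rw [Finset.prod_congr rfl hc, Finset.prod_const, hsdef, Nat.card_Ioc]
      congr 1
      omega
    have chern := measure_le_le_exp_mul_mgf (μ := P) (X := fun ω => ∑ k ∈ s, X k ω)
      (u n) ht0.le hSexpint
    rw [hmgf] at chern
    have hexp_le : Real.exp (-t * u n) ≤ C ^ (L n + 1) := by
      have h1 : ε * Real.sqrt (c n) < (L n : ℝ) + 1 := Nat.lt_floor_add_one _
      have hδθ : δ = θ * ε := by rw [hθdef]; field_simp
      have h2 : -t * u n ≤ ((L n : ℝ) + 1) * (-θ * t) := by
        have hu : u n = θ * (ε * Real.sqrt (c n)) := by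
          show δ * Real.sqrt (c n) = θ * (ε * Real.sqrt (c n))
          rw [hθdef]; field_simp
        rw [hu]
        have h3 := mul_le_mul_of_nonneg_left h1.le
          (mul_nonneg (neg_nonneg.2 ht0.le) hθpos.le)
        nlinarith [h3]
      calc Real.exp (-t * u n) ≤ Real.exp (((L n : ℝ) + 1) * (-θ * t)) :=
            Real.exp_le_exp.2 h2
        _ = Real.exp (((L n + 1 : ℕ) : ℝ) * (-θ * t)) := by push_cast; ring_nf
        _ = C ^ (L n + 1) := by rw [Real.exp_nat_mul, hCdef]
    have hfinal : (P {ω | (∑ k ∈ s, X k ω) ≤ u n}).toReal ≤ C * ρ ^ L n := by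
      calc (P {ω | (∑ k ∈ s, X k ω) ≤ u n}).toReal
          ≤ Real.exp (-t * u n) * M ^ L n := chern
        _ ≤ C ^ (L n + 1) * M ^ L n := by
            refine mul_le_mul_of_nonneg_right hexp_le (pow_nonneg hMpos.le _)
        _ = C * (C * M) ^ L n := by rw [mul_pow, pow_succ]; ring
        _ ≤ C * ρ ^ L n := by
            refine mul_le_mul_of_nonneg_left
              (pow_le_pow_left₀ (mul_nonneg (by linarith) hMpos.le) hM1 _) (by linarith)
    refine (ENNReal.le_ofReal_iff_toReal_le (measure_ne_top P _) ?_).2 hfinal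
    positivity
  -- increments of Stilde are block sums
  have hSt : ∀ (r : ℕ) (ω : Ω), Stilde η J r ω = ∑ k ∈ Finset.Ioc 0 r, X k ω := by
    intro r ω
    rw [Stilde]
    have hix : Finset.Icc 1 r = Finset.Ioc 0 r := by
      ext x; simp [Finset.mem_Icc, Finset.mem_Ioc]; omega
    rw [hix]
  have hdiff : ∀ (n m : ℕ) (ω : Ω),
      Stilde η J (m + L n) ω - Stilde η J m ω = ∑ k ∈ Finset.Ioc m (m + L n), X k ω := by
    intro n m ω
    rw [hSt, hSt]
    have := Finset.sum_Ioc_consecutive (fun k => X k ω) (Nat.zero_le m)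
      (Nat.le_add_right m (L n))
    linarith
  -- the good sets
  set G : ℕ → Set Ω := fun n =>
    {ω | ∀ m ≤ Mn n, u n ≤ Stilde η J (m + L n) ω - Stilde η J m ω} with hGdef
  have hStmeas : ∀ r : ℕ, Measurable (fun ω => Stilde η J r ω) := by
    intro r
    have : (fun ω => Stilde η J r ω) = fun ω => ∑ k ∈ Finset.Ioc 0 r, X k ω := by
      ext ω; exact hSt r ω
    rw [this]
    exact Finset.measurable_sum _ (fun k _ => hXmeas k)
  have hGmeas : ∀ n, MeasurableSet (G n) := by
    intro n
    have : G n = ⋂ (m : ℕ) (_ : m ≤ Mn n),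
        {ω | u n ≤ Stilde η J (m + L n) ω - Stilde η J m ω} := by
      ext ω; simp [hGdef, Set.mem_iInter]
    rw [this]
    exact MeasurableSet.iInter fun m => MeasurableSet.iInter fun _ =>
      measurableSet_le measurable_const ((hStmeas _).sub (hStmeas _))
  -- union bound
  set K : ℝ := (a / ε ^ 2 + 1) * C with hKdef
  have hGc : ∀ n, P (G n)ᶜ ≤ ENNReal.ofReal (((Mn n : ℝ) + 1) * (C * ρ ^ L n)) := by
    intro n
    have hsub : (G n)ᶜ ⊆ ⋃ m ∈ Finset.range (Mn n + 1),
        {ω | (∑ k ∈ Finset.Ioc m (m + L n), X k ω) ≤ u n} := by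
      intro ω hω
      simp only [hGdef, Set.mem_compl_iff, Set.mem_setOf_eq, not_forall, not_le] at hω
      obtain ⟨m, hm, hlt⟩ := hω
      refine Set.mem_biUnion (Finset.mem_range.2 (Nat.lt_succ_of_le hm)) ?_
      have := hdiff n m ω
      simp only [Set.mem_setOf_eq]
      linarith
    calc P (G n)ᶜ
        ≤ P (⋃ m ∈ Finset.range (Mn n + 1),
            {ω | (∑ k ∈ Finset.Ioc m (m + L n), X k ω) ≤ u n}) := measure_mono hsub
      _ ≤ ∑ m ∈ Finset.range (Mn n + 1),
            P {ω | (∑ k ∈ Finset.Ioc m (m + L n), X k ω) ≤ u n} :=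
          measure_biUnion_finset_le _ _
      _ ≤ ∑ _m ∈ Finset.range (Mn n + 1), ENNReal.ofReal (C * ρ ^ L n) :=
          Finset.sum_le_sum (fun m _ => hblock n m)
      _ = (Mn n + 1 : ℕ) * ENNReal.ofReal (C * ρ ^ L n) := by
          rw [Finset.sum_const, Finset.card_range, nsmul_eq_mul]
      _ = ENNReal.ofReal (((Mn n : ℝ) + 1) * (C * ρ ^ L n)) := by
          rw [← ENNReal.ofReal_natCast (Mn n + 1), ← ENNReal.ofReal_mul (by positivity)]
          congr 1
          push_cast
          ring
  have hbound : ∀ n, ((Mn n : ℝ) + 1) * (C * ρ ^ L n)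
      ≤ K * ((L n : ℝ) + 1) ^ 2 * ρ ^ L n := by
    intro n
    have hkey : (Mn n : ℝ) + 1 ≤ (a / ε ^ 2 + 1) * ((L n : ℝ) + 1) ^ 2 := by
      have hMa : (Mn n : ℝ) ≤ a * c n := Nat.floor_le (by positivity)
      have hc2 : Real.sqrt (c n) ^ 2 = (c n : ℝ) := Real.sq_sqrt (by positivity)
      have hsL : ε * Real.sqrt (c n) < (L n : ℝ) + 1 := Nat.lt_floor_add_one _
      have hsq : 0 ≤ Real.sqrt (c n) := Real.sqrt_nonneg _
      have hL0 : (0:ℝ) ≤ (L n : ℝ) := Nat.cast_nonneg _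
      have h5 : (ε * Real.sqrt (c n)) ^ 2 ≤ ((L n : ℝ) + 1) ^ 2 := by
        refine pow_le_pow_left₀ (by positivity) hsL.le 2
      have h6 : ε ^ 2 * (c n : ℝ) ≤ ((L n : ℝ) + 1) ^ 2 := by
        calc ε ^ 2 * (c n : ℝ) = (ε * Real.sqrt (c n)) ^ 2 := by
              rw [mul_pow, hc2]
          _ ≤ ((L n : ℝ) + 1) ^ 2 := h5
      have h7 : a * (c n : ℝ) ≤ a / ε ^ 2 * ((L n : ℝ) + 1) ^ 2 := by
        rw [div_mul_eq_mul_div, le_div_iff₀ (by positivity)]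
        calc a * (c n : ℝ) * ε ^ 2 = a * (ε ^ 2 * (c n : ℝ)) := by ring
          _ ≤ a * ((L n : ℝ) + 1) ^ 2 := by
              exact mul_le_mul_of_nonneg_left h6 ha.le
      have h8 : (1:ℝ) ≤ ((L n : ℝ) + 1) ^ 2 := by nlinarith
      nlinarith [div_nonneg ha.le (sq_nonneg ε)]
    calc ((Mn n : ℝ) + 1) * (C * ρ ^ L n)
        ≤ ((a / ε ^ 2 + 1) * ((L n : ℝ) + 1) ^ 2) * (C * ρ ^ L n) := by
          refine mul_le_mul_of_nonneg_right hkey (by positivity)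
      _ = K * ((L n : ℝ) + 1) ^ 2 * ρ ^ L n := by rw [hKdef]; ring
  -- limits
  have hLtend : Tendsto L atTop atTop := by
    apply tendsto_nat_floor_atTop.comp
    exact (sqrt_tendsto.comp (tendsto_natCast_atTop_atTop.comp hunbdd)).const_mul_atTop hε
  have hreal : Tendsto (fun n => K * ((L n : ℝ) + 1) ^ 2 * ρ ^ L n) atTop (𝓝 0) :=
    (decay K ρ hρpos.le hρlt).comp hLtend
  have hofReal : Tendsto (fun n => ENNReal.ofReal (K * ((L n : ℝ) + 1) ^ 2 * ρ ^ L n))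
      atTop (𝓝 0) := by
    have := ENNReal.tendsto_ofReal hreal
    simpa using this
  have hPbad : Tendsto (fun n => P (G n)ᶜ) atTop (𝓝 0) :=
    tendsto_of_tendsto_of_tendsto_of_le_of_le tendsto_const_nhds hofReal
      (fun n => zero_le)
      (fun n => (hGc n).trans (ENNReal.ofReal_le_ofReal (hbound n)))
  have hfin : ∀ n, P (G n) = 1 - P (G n)ᶜ := by
    intro n
    have := prob_compl_eq_one_sub (μ := P) (hGmeas n).compl
    rwa [compl_compl] at this
  have htends : Tendsto (fun n => 1 - P (G n)ᶜ) atTop (𝓝 1) := by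
    have hcont : Tendsto (fun x : ENNReal => 1 - x) (𝓝 0) (𝓝 1) := by
      have := (ENNReal.continuous_sub_left (a := 1) ENNReal.one_ne_top).tendsto 0
      simpa using this
    exact hcont.comp hPbad
  refine htends.congr (fun n => ?_)
  rw [← hfin n]


end ABTest
end
end

section
/- Let p, p_θ ∈ (0,1) and d_2, d_3 ∈ ℝ, and let (G_1,G_2,G_3) be a centered Gaussian vector in ℝ³ with covariance matrix V_1. Then Var(p_θ G_1 − p G_2 + (1−p) G_3) = p_θ(1−p_θ) p (1−p), and the random variable (d_2 + G_2 − p_θ G_1 − (1−p)(d_2+d_3+G_2+G_3))² / ((1−p_θ)p_θ(1−p)) + (d_3 + G_3 + p_θ G_1 − p(d_2+d_3+G_2+G_3))² / ((1−p_θ)p_θ p) has the same distribution as (𝒩 − (p d_2 − (1−p) d_3)/√(p p_θ (1−p)(1−p_θ)))², where 𝒩 is a standard normal random variable. -/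
open MeasureTheory ProbabilityTheory Filter Finset Topology

open scoped NNReal ENNReal

section AuxIntegrals
open Real Set

lemma integrable_sq_mul_exp {b : ℝ} (hb : 0 < b) :
    Integrable (fun x : ℝ => x ^ 2 * Real.exp (-b * x ^ 2)) := by
  have h := integrable_rpow_mul_exp_neg_mul_sq hb (s := 2) (by norm_num)
  have : (fun x : ℝ => x ^ (2:ℝ) * Real.exp (-b * x ^ 2))
      = fun x : ℝ => x ^ 2 * Real.exp (-b * x ^ 2) := by
    funext x
    rw [show (2:ℝ) = ((2:ℕ):ℝ) by norm_num, Real.rpow_natCast]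
  rwa [this] at h

lemma tendsto_mul_exp_neg_mul_sq {b : ℝ} (hb : 0 < b) :
    Tendsto (fun x : ℝ => x * Real.exp (-b * x ^ 2)) atTop (nhds 0) := by
  have h := rpow_mul_exp_neg_mul_sq_isLittleO_exp_neg hb 1
  have h2 : Tendsto (fun x : ℝ => Real.exp (-(1/2) * x)) atTop (nhds 0) := by
    have ha : Tendsto (fun x : ℝ => -(1/2) * x) atTop atBot := by
      have h0 : Tendsto (fun x : ℝ => x * (1/2)) atTop atTop :=
        Tendsto.atTop_mul_const (by norm_num) tendsto_id
      have h3 := tendsto_neg_atTop_atBot.comp h0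
      refine h3.congr fun x => ?_
      simp [Function.comp]; ring
    exact Real.tendsto_exp_atBot.comp ha
  have := h.tendsto_zero_of_tendsto h2
  refine this.congr' ?_
  filter_upwards [eventually_gt_atTop (0:ℝ)] with x hx
  rw [Real.rpow_one]

lemma integral_Ioi_sq_mul_exp {b : ℝ} (hb : 0 < b) :
    ∫ x in Ioi (0:ℝ), x ^ 2 * Real.exp (-b * x ^ 2) = Real.sqrt (π / b) / (4 * b) := by
  set F : ℝ → ℝ := fun x => -(1 / (2 * b)) * (x * Real.exp (-b * x ^ 2)) with hF
  have hderiv : ∀ x : ℝ, HasDerivAt F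
      (x ^ 2 * Real.exp (-b * x ^ 2) - (1 / (2 * b)) * Real.exp (-b * x ^ 2)) x := by
    intro x
    have h1 : HasDerivAt (fun x : ℝ => -b * x ^ 2) (-b * (2 * x)) x := by
      simpa using ((hasDerivAt_pow 2 x).const_mul (-b))
    have h2 : HasDerivAt (fun x : ℝ => Real.exp (-b * x ^ 2))
        (Real.exp (-b * x ^ 2) * (-b * (2 * x))) x := h1.exp
    have h3 : HasDerivAt (fun x : ℝ => x * Real.exp (-b * x ^ 2))
        (1 * Real.exp (-b * x ^ 2) + x * (Real.exp (-b * x ^ 2) * (-b * (2 * x)))) x :=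
      (hasDerivAt_id x).mul h2
    have h4 := h3.const_mul (-(1 / (2 * b)))
    refine h4.congr_deriv ?_
    have hbb : (1 / (2 * b)) * (2 * b) = 1 := by rw [one_div, inv_mul_cancel₀ (by positivity)]
    linear_combination (x ^ 2 * Real.exp (-b * x ^ 2)) * hbb
  have hg : Integrable (fun x : ℝ => (1 / (2 * b)) * Real.exp (-b * x ^ 2)) :=
    (integrable_exp_neg_mul_sq hb).const_mul _
  have hint : Integrable (fun x : ℝ =>
      x ^ 2 * Real.exp (-b * x ^ 2) - (1 / (2 * b)) * Real.exp (-b * x ^ 2)) :=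
    (integrable_sq_mul_exp hb).sub hg
  have htend : Tendsto F atTop (nhds 0) := by
    have := (tendsto_mul_exp_neg_mul_sq hb).const_mul (-(1 / (2 * b)))
    rw [mul_zero] at this
    exact this
  have key := integral_Ioi_of_hasDerivAt_of_tendsto
    (f := F)
    (f' := fun x => x ^ 2 * Real.exp (-b * x ^ 2) - (1 / (2 * b)) * Real.exp (-b * x ^ 2))
    (a := 0)
    ((hderiv 0).continuousAt.continuousWithinAt)
    (fun x _ => hderiv x) (hint.integrableOn) htend
  have hF0 : F 0 = 0 := by simp [hF]
  rw [hF0, zero_sub, neg_zero] at key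
  have hsplit : ∫ x in Ioi (0:ℝ), x ^ 2 * Real.exp (-b * x ^ 2)
      = (∫ x in Ioi (0:ℝ), (x ^ 2 * Real.exp (-b * x ^ 2)
          - (1 / (2 * b)) * Real.exp (-b * x ^ 2)))
        + ∫ x in Ioi (0:ℝ), (1 / (2 * b)) * Real.exp (-b * x ^ 2) := by
    rw [← integral_add hint.integrableOn hg.integrableOn]
    congr 1
    funext x
    ring
  rw [hsplit, key, integral_const_mul, integral_gaussian_Ioi, zero_add,
    eq_div_iff (by positivity)]
  field_simp
  ring

lemma integral_sq_mul_exp {b : ℝ} (hb : 0 < b) :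
    ∫ x : ℝ, x ^ 2 * Real.exp (-b * x ^ 2) = Real.sqrt (π / b) / (2 * b) := by
  have h := integral_comp_abs (f := fun x : ℝ => x ^ 2 * Real.exp (-b * x ^ 2))
  have heq : (fun x : ℝ => |x| ^ 2 * Real.exp (-b * |x| ^ 2))
      = fun x : ℝ => x ^ 2 * Real.exp (-b * x ^ 2) := by
    funext x; rw [sq_abs]
  rw [heq] at h
  rw [h, integral_Ioi_sq_mul_exp hb]
  ring

lemma integral_gaussianReal_eq {v : ℝ≥0} (hv : v ≠ 0) (g : ℝ → ℝ) :
    ∫ x, g x ∂(gaussianReal 0 v) = ∫ x, gaussianPDFReal 0 v x * g x := by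
  rw [gaussianReal_of_var_ne_zero 0 hv]
  have hmeas : Measurable (fun x => (gaussianPDFReal 0 v x).toNNReal) :=
    (measurable_gaussianPDFReal 0 v).real_toNNReal
  have hd : gaussianPDF 0 v = fun x => ((gaussianPDFReal 0 v x).toNNReal : ℝ≥0∞) := rfl
  rw [hd, integral_withDensity_eq_integral_smul hmeas]
  congr 1
  funext x
  rw [NNReal.smul_def, smul_eq_mul, Real.coe_toNNReal _ (gaussianPDFReal_nonneg 0 v x)]

lemma gaussianPDFReal_zero_mean_eq (v : ℝ≥0) (x : ℝ) :
    gaussianPDFReal 0 v x = (Real.sqrt (2 * π * v))⁻¹ * Real.exp (-(1/(2*(v:ℝ))) * x ^ 2) := by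
  rw [gaussianPDFReal]
  congr 1
  rw [sub_zero]
  by_cases h : (v:ℝ) = 0
  · simp [h]
  · field_simp

lemma integral_id_gaussianReal {v : ℝ≥0} (hv : v ≠ 0) :
    ∫ x, x ∂(gaussianReal 0 v) = 0 := by
  rw [integral_gaussianReal_eq hv]
  have h := integral_neg_eq_self (fun x => gaussianPDFReal 0 v x * x) volume
  have heq : (fun x : ℝ => gaussianPDFReal 0 v (-x) * (-x))
      = fun x : ℝ => -(gaussianPDFReal 0 v x * x) := by
    funext x
    rw [gaussianPDFReal_zero_mean_eq, gaussianPDFReal_zero_mean_eq, neg_sq]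
    ring
  rw [heq, integral_neg] at h
  linarith

lemma integral_sq_gaussianReal {v : ℝ≥0} (hv : v ≠ 0) :
    ∫ x, x ^ 2 ∂(gaussianReal 0 v) = v := by
  have hvpos : (0:ℝ) < v := NNReal.coe_pos.mpr (pos_iff_ne_zero.mpr hv)
  have hb : (0:ℝ) < 1/(2*(v:ℝ)) := by positivity
  rw [integral_gaussianReal_eq hv]
  have heq : (fun x : ℝ => gaussianPDFReal 0 v x * x ^ 2)
      = fun x : ℝ => (Real.sqrt (2*π*(v:ℝ)))⁻¹ * (x^2 * Real.exp (-(1/(2*(v:ℝ))) * x^2)) := by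
    funext x
    rw [gaussianPDFReal_zero_mean_eq]
    ring
  rw [heq, integral_const_mul, integral_sq_mul_exp hb]
  have h1 : π / (1/(2*(v:ℝ))) = 2*π*(v:ℝ) := by field_simp
  rw [h1]
  have h2 : Real.sqrt (2*π*(v:ℝ)) ≠ 0 := by positivity
  field_simp

lemma integrable_sq_gaussianReal {v : ℝ≥0} (hv : v ≠ 0) :
    Integrable (fun x : ℝ => x ^ 2) (gaussianReal 0 v) := by
  have hvpos : (0:ℝ) < v := NNReal.coe_pos.mpr (pos_iff_ne_zero.mpr hv)
  have hb : (0:ℝ) < 1/(2*(v:ℝ)) := by positivity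
  rw [gaussianReal_of_var_ne_zero 0 hv]
  have hmeas : Measurable (fun x => (gaussianPDFReal 0 v x).toNNReal) :=
    (measurable_gaussianPDFReal 0 v).real_toNNReal
  have hd : gaussianPDF 0 v = fun x => ((gaussianPDFReal 0 v x).toNNReal : ℝ≥0∞) := rfl
  rw [hd, integrable_withDensity_iff_integrable_smul hmeas]
  have : (fun x : ℝ => (gaussianPDFReal 0 v x).toNNReal • x ^ 2)
      = fun x : ℝ => (Real.sqrt (2*π*(v:ℝ)))⁻¹ * (x^2 * Real.exp (-(1/(2*(v:ℝ))) * x^2)) := by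
    funext x
    rw [NNReal.smul_def, smul_eq_mul, Real.coe_toNNReal _ (gaussianPDFReal_nonneg 0 v x),
      gaussianPDFReal_zero_mean_eq]
    ring
  rw [this]
  exact (integrable_sq_mul_exp hb).const_mul _

lemma memℒp_two_id_gaussianReal {v : ℝ≥0} (hv : v ≠ 0) :
    MemLp (fun x : ℝ => x) 2 (gaussianReal 0 v) := by
  refine (memLp_two_iff_integrable_sq (f := fun x : ℝ => x)
    (μ := gaussianReal 0 v) aestronglyMeasurable_id).mpr ?_
  exact (integrable_sq_gaussianReal hv).congr (Filter.Eventually.of_forall fun x => by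
    simp [sq])

lemma variance_id_gaussianReal {v : ℝ≥0} (hv : v ≠ 0) :
    variance (fun x : ℝ => x) (gaussianReal 0 v) = v := by
  rw [variance_eq_sub (memℒp_two_id_gaussianReal hv)]
  have h1 : ((fun x : ℝ => x) ^ 2) = fun x : ℝ => x ^ 2 := rfl
  rw [h1, integral_sq_gaussianReal hv, integral_id_gaussianReal hv]
  simp

lemma variance_map_eq {Ω : Type*} [MeasurableSpace Ω] {μ : Measure Ω} {X : Ω → ℝ}
    (hX : AEMeasurable X μ) :
    variance (fun x : ℝ => x) (μ.map X) = variance X μ := by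
  rw [variance, variance, evariance, evariance]
  have hm : ∫ x, x ∂(μ.map X) = ∫ ω, X ω ∂μ := integral_map hX aestronglyMeasurable_id
  congr 1
  rw [lintegral_map' (by fun_prop) hX]
  simp_rw [hm]

end AuxIntegrals

noncomputable section

namespace ABTest

/-- `G` is a centered Gaussian random vector with covariance matrix `V` under `P'`:
every linear combination `⟨a, G⟩` has law `N(0, aᵀ V a)`. -/
def IsCenteredGaussian {Ω' : Type*} [MeasurableSpace Ω'] (P' : Measure Ω') {n : ℕ}
    (G : Ω' → Fin n → ℝ) (V : Matrix (Fin n) (Fin n) ℝ) : Prop :=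
  (∀ i, Measurable fun ω => G ω i) ∧
    ∀ a : Fin n → ℝ,
      Measure.map (fun ω => ∑ i, a i * G ω i) P' =
        gaussianReal 0 (Real.toNNReal (∑ i, ∑ j, a i * (V i j * a j)))

/-- The covariance matrix `V₁`. -/
def V1 (p pθ : ℝ) : Matrix (Fin 3) (Fin 3) ℝ :=
  !![p * (1 - p), p * (1 - p) * pθ, -(p * (1 - p) * pθ);
     p * (1 - p) * pθ, pθ * (1 - p) * (1 - pθ * (1 - p)), -(p * (1 - p) * pθ ^ 2);
     -(p * (1 - p) * pθ), -(p * (1 - p) * pθ ^ 2), p * pθ * (1 - p * pθ)]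

/-- **Identification of the limiting law of the chi-squared statistic.** For a centered
Gaussian vector `(G₁,G₂,G₃)` with covariance matrix `V₁`:
`Var(p_θ G₁ - p G₂ + (1-p) G₃) = p_θ(1-p_θ) p (1-p)`, and
`(d₂ + G₂ - p_θ G₁ - (1-p)(d₂+d₃+G₂+G₃))²/((1-p_θ)p_θ(1-p))
  + (d₃ + G₃ + p_θ G₁ - p(d₂+d₃+G₂+G₃))²/((1-p_θ)p_θ p)`
has the same law as `(𝒩 - (p d₂ - (1-p) d₃)/√(p p_θ (1-p)(1-p_θ)))²` for `𝒩` standard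
normal. -/
theorem chiSq_limit_law_identification
    {Ω' : Type*} [MeasurableSpace Ω'] (P' : Measure Ω') [IsProbabilityMeasure P']
    (p pθ : ℝ) (hp : 0 < p ∧ p < 1) (hpθ : 0 < pθ ∧ pθ < 1)
    (d2 d3 : ℝ) (G : Ω' → Fin 3 → ℝ)
    (hG : IsCenteredGaussian P' G (V1 p pθ)) :
    variance (fun ω => pθ * G ω 0 - p * G ω 1 + (1 - p) * G ω 2) P' =
      pθ * (1 - pθ) * p * (1 - p) ∧
    Measure.map (fun ω =>
        (d2 + G ω 1 - pθ * G ω 0 - (1 - p) * (d2 + d3 + G ω 1 + G ω 2)) ^ 2 /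
          ((1 - pθ) * pθ * (1 - p)) +
        (d3 + G ω 2 + pθ * G ω 0 - p * (d2 + d3 + G ω 1 + G ω 2)) ^ 2 /
          ((1 - pθ) * pθ * p)) P' =
      Measure.map (fun x =>
        (x - (p * d2 - (1 - p) * d3) / Real.sqrt (p * pθ * (1 - p) * (1 - pθ))) ^ 2)
        (gaussianReal 0 1) := by
  obtain ⟨hp0, hp1⟩ := hp
  obtain ⟨hq0, hq1⟩ := hpθ
  have h1p : (0:ℝ) < 1 - p := by linarith
  have h1q : (0:ℝ) < 1 - pθ := by linarith
  set a : Fin 3 → ℝ := ![pθ, -p, 1-p] with ha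
  have hL : Measurable fun ω => pθ * G ω 0 - p * G ω 1 + (1 - p) * G ω 2 :=
    (((hG.1 0).const_mul pθ).sub ((hG.1 1).const_mul p)).add ((hG.1 2).const_mul (1-p))
  have hsum : (fun ω => ∑ i, a i * G ω i)
      = fun ω => pθ * G ω 0 - p * G ω 1 + (1 - p) * G ω 2 := by
    funext ω
    simp [ha, Fin.sum_univ_three]
    ring
  have hs : (∑ i, ∑ j, a i * (V1 p pθ i j * a j)) = pθ * (1 - pθ) * p * (1 - p) := by
    simp [ha, V1, Fin.sum_univ_three]
    ring
  have hmap := hG.2 a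
  rw [hsum, hs] at hmap
  have hspos : 0 < pθ * (1 - pθ) * p * (1 - p) :=
    mul_pos (mul_pos (mul_pos hq0 h1q) hp0) h1p
  have hvne : Real.toNNReal (pθ * (1 - pθ) * p * (1 - p)) ≠ 0 :=
    (Real.toNNReal_pos.mpr hspos).ne'
  constructor
  · rw [← variance_map_eq hL.aemeasurable, hmap, variance_id_gaussianReal hvne,
      Real.coe_toNNReal _ hspos.le]
  · set σ : ℝ := Real.sqrt (p * pθ * (1 - p) * (1 - pθ)) with hσ
    have hppos : 0 < p * pθ * (1 - p) * (1 - pθ) :=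
      mul_pos (mul_pos (mul_pos hp0 hq0) h1p) h1q
    have hσpos : 0 < σ := Real.sqrt_pos.mpr hppos
    have hσsq : σ ^ 2 = p * pθ * (1 - p) * (1 - pθ) := Real.sq_sqrt hppos.le
    set c : ℝ := p * d2 - (1 - p) * d3 with hc
    have hZ : Measure.map
        (fun ω => σ⁻¹ * (pθ * G ω 0 - p * G ω 1 + (1 - p) * G ω 2)) P'
        = gaussianReal 0 1 := by
      have h1 : (fun ω => σ⁻¹ * (pθ * G ω 0 - p * G ω 1 + (1 - p) * G ω 2))
          = (fun x : ℝ => σ⁻¹ * x) ∘ (fun ω => pθ * G ω 0 - p * G ω 1 + (1 - p) * G ω 2) := rfl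
      rw [h1, ← Measure.map_map (measurable_id'.const_mul σ⁻¹) hL, hmap]
      have h2 := gaussianReal_map_const_mul
        (μ := 0) (v := Real.toNNReal (pθ * (1 - pθ) * p * (1 - p))) σ⁻¹
      have h3 : (fun x : ℝ => σ⁻¹ * x) = (σ⁻¹ * ·) := rfl
      rw [h3, h2, mul_zero]
      congr 1
      apply NNReal.coe_injective
      push_cast
      rw [Real.coe_toNNReal _ hspos.le]
      rw [inv_pow]
      rw [hσsq]
      field_simp
    have hfmeas : Measurable (fun x : ℝ => (x - c / σ) ^ 2) :=
      (measurable_id.sub_const _).pow_const 2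
    have hstat : (fun ω =>
        (d2 + G ω 1 - pθ * G ω 0 - (1 - p) * (d2 + d3 + G ω 1 + G ω 2)) ^ 2 /
          ((1 - pθ) * pθ * (1 - p)) +
        (d3 + G ω 2 + pθ * G ω 0 - p * (d2 + d3 + G ω 1 + G ω 2)) ^ 2 /
          ((1 - pθ) * pθ * p))
        = (fun x : ℝ => (x - c / σ) ^ 2) ∘
          (fun ω => σ⁻¹ * (pθ * G ω 0 - p * G ω 1 + (1 - p) * G ω 2)) := by
      funext ω
      simp only [Function.comp]
      set L := pθ * G ω 0 - p * G ω 1 + (1 - p) * G ω 2 with hLdef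
      have e1 : σ⁻¹ * L - c / σ = (L - c) / σ := by
        field_simp
      rw [e1, div_pow, hσsq]
      have e2 : d2 + G ω 1 - pθ * G ω 0 - (1 - p) * (d2 + d3 + G ω 1 + G ω 2) = c - L := by
        rw [hc, hLdef]; ring
      have e3 : d3 + G ω 2 + pθ * G ω 0 - p * (d2 + d3 + G ω 1 + G ω 2) = L - c := by
        rw [hc, hLdef]; ring
      rw [e2, e3]
      field_simp
      ring
    rw [hstat, ← Measure.map_map hfmeas (hL.const_mul σ⁻¹), hZ]

end ABTest
end
end
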